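/- The shuffle map V_n: C₁^{⊗n} ⊗ C₂^{⊗n} → (C₁ ⊗ C₂)^{⊗n}, which interleaves the tensor factors with Koszul signs, is a chain map and is S_n-equivariant for the signed permutation actions on source and target. -/

import Mathlib

open scoped TensorProduct
open PiTensorProduct

/-- `(-1)^n` for an integer `n`, as an integer. -/
def sgn (n : ℤ) : ℤ := (((-1 : ℤˣ) ^ n : ℤˣ) : ℤ)

/-- The Koszul sign incurred by the shuffle `Vₙ` on elementary tensors: each `d_i` (degree
`dd i`) moves past the `c_j` (degree `dc j`) with `j > i`. -/
def shuffleSign (n : ℕ) (dc dd : Fin n → ℤ) : ℤ :=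
  ∑ i : Fin n, ∑ j : Fin n, if i < j then dd i * dc j else 0

/-- Koszul sign of the action of a permutation `σ` on an elementary tensor of homogeneous
elements of degrees `e`: the product of `(-1)^(e i · e j)` over inversions of `σ`. -/
def permSign (n : ℕ) (σ : Equiv.Perm (Fin n)) (e : Fin n → ℤ) : ℤ :=
  ∑ i : Fin n, ∑ j : Fin n, if i < j ∧ σ j < σ i then e i * e j else 0


lemma sgn_def (a : ℤ) : sgn a = (a.negOnePow : ℤ) := rfl

lemma sgn_mul (a b : ℤ) : sgn a * sgn b = sgn (a + b) := by
  rw [sgn_def, sgn_def, sgn_def, Int.negOnePow_add, Units.val_mul]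

lemma sgn_congr {a b : ℤ} (h : Even (a - b)) : sgn a = sgn b := by
  rw [sgn_def, sgn_def, (Int.negOnePow_eq_iff a b).2 h]

lemma shuffle_update_left (n : ℕ) (dc dd : Fin n → ℤ) (k : Fin n) :
    shuffleSign n (Function.update dc k (dc k - 1)) dd
      = shuffleSign n dc dd - ∑ i : Fin n, (if i < k then dd i else 0) := by
  unfold shuffleSign
  rw [← Finset.sum_sub_distrib]
  refine Finset.sum_congr rfl fun i _ => ?_
  have : ∀ j : Fin n, (if i < j then dd i * Function.update dc k (dc k - 1) j else 0)
      = (if i < j then dd i * dc j else 0) - (if j = k then (if i < k then dd i else 0) else 0) := by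
    intro j
    by_cases hj : j = k
    · subst hj; simp [Function.update_self]; split_ifs <;> ring
    · simp [Function.update_of_ne hj, hj]
  simp_rw [this]
  rw [Finset.sum_sub_distrib, Finset.sum_ite_eq' Finset.univ k
    (fun _ => if i < k then dd i else 0)]
  simp

lemma shuffle_update_right (n : ℕ) (dc dd : Fin n → ℤ) (k : Fin n) :
    shuffleSign n dc (Function.update dd k (dd k - 1))
      = shuffleSign n dc dd - ∑ j : Fin n, (if k < j then dc j else 0) := by
  unfold shuffleSign
  rw [Finset.sum_comm, Finset.sum_comm (f := fun i j => if i < j then dd i * dc j else 0),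
    ← Finset.sum_sub_distrib]
  refine Finset.sum_congr rfl fun j _ => ?_
  have : ∀ i : Fin n, (if i < j then Function.update dd k (dd k - 1) i * dc j else 0)
      = (if i < j then dd i * dc j else 0) - (if i = k then (if k < j then dc j else 0) else 0) := by
    intro i
    by_cases hi : i = k
    · subst hi; simp [Function.update_self]; split_ifs <;> ring
    · simp [Function.update_of_ne hi, hi]
  simp_rw [this]
  rw [Finset.sum_sub_distrib, Finset.sum_ite_eq' Finset.univ k
    (fun _ => if k < j then dc j else 0)]
  simp

lemma tri_sum (n : ℕ) (dc : Fin n → ℤ) (k : Fin n) :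
    ∑ l : Fin n, dc l = (∑ l : Fin n, if l < k then dc l else 0) + dc k
      + ∑ l : Fin n, if k < l then dc l else 0 := by
  have hk : dc k = ∑ l : Fin n, (if l = k then dc l else 0) := by
    rw [Finset.sum_ite_eq' Finset.univ k dc]; simp
  rw [hk, ← Finset.sum_add_distrib, ← Finset.sum_add_distrib]
  refine Finset.sum_congr rfl fun l _ => ?_
  rcases lt_trichotomy l k with h|h|h
  · simp [h, h.ne, asymm h]
  · simp [h, lt_irrefl]
  · simp [h, (asymm h : ¬ l < k), h.ne']

lemma split_lt (n : ℕ) (dc dd : Fin n → ℤ) (k : Fin n) :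
    (∑ l : Fin n, if l < k then dc l + dd l else 0)
      = (∑ l : Fin n, if l < k then dc l else 0) + ∑ l : Fin n, if l < k then dd l else 0 := by
  rw [← Finset.sum_add_distrib]
  refine Finset.sum_congr rfl fun l _ => ?_
  split_ifs <;> simp

lemma equiv_parity (n : ℕ) (σ : Equiv.Perm (Fin n)) (dc dd : Fin n → ℤ) :
    Even ((permSign n σ (fun i => dc i + dd i) + shuffleSign n dc dd)
      - (permSign n σ dc + permSign n σ dd
        + ∑ i : Fin n, ∑ j : Fin n, if i < j then dd (σ⁻¹ i) * dc (σ⁻¹ j) else 0)) := by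
  have hR2 : (∑ i : Fin n, ∑ j : Fin n, if i < j then dd (σ⁻¹ i) * dc (σ⁻¹ j) else 0)
      = ∑ i : Fin n, ∑ j : Fin n, if σ i < σ j then dd i * dc j else 0 := by
    rw [← Equiv.sum_comp σ (fun i => ∑ j : Fin n, if i < j then dd (σ⁻¹ i) * dc (σ⁻¹ j) else 0)]
    refine Finset.sum_congr rfl fun i _ => ?_
    rw [← Equiv.sum_comp σ (fun j => if σ i < j then dd (σ⁻¹ (σ i)) * dc (σ⁻¹ j) else 0)]
    simp
  have hsplit : (∑ i : Fin n, ∑ j : Fin n, if σ i < σ j then dd i * dc j else 0)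
      = (∑ i : Fin n, ∑ j : Fin n, if i < j ∧ σ i < σ j then dd i * dc j else 0)
        + ∑ i : Fin n, ∑ j : Fin n, if i < j ∧ σ j < σ i then dd j * dc i else 0 := by
    have hswap : (∑ i : Fin n, ∑ j : Fin n, if i < j ∧ σ j < σ i then dd j * dc i else 0)
        = ∑ i : Fin n, ∑ j : Fin n, if j < i ∧ σ i < σ j then dd i * dc j else 0 := by
      rw [Finset.sum_comm]
    rw [hswap, ← Finset.sum_add_distrib]
    refine Finset.sum_congr rfl fun i _ => ?_
    rw [← Finset.sum_add_distrib]
    refine Finset.sum_congr rfl fun j _ => ?_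
    rcases lt_trichotomy i j with h|h|h
    · simp [h, asymm h]
    · subst h; simp
    · simp [h, asymm h]
  rw [hR2, hsplit]
  refine ⟨∑ i : Fin n, ∑ j : Fin n, if i < j ∧ σ j < σ i then dd i * dc j else 0, ?_⟩
  unfold permSign shuffleSign
  simp only [← Finset.sum_sub_distrib, ← Finset.sum_add_distrib]
  refine Finset.sum_congr rfl fun i _ => ?_
  refine Finset.sum_congr rfl fun j _ => ?_
  by_cases h : i < j
  · have hne : σ i ≠ σ j := fun e => absurd (σ.injective e) (ne_of_lt h)
    rcases hne.lt_or_gt with h2|h2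
    · simp only [h, h2, asymm h2, true_and, and_false, if_true, if_false, and_true]
      ring
    · simp only [h, h2, asymm h2, true_and, and_false, if_true, if_false, and_true]
      ring
  · simp [h]

/-- The shuffle map `Vₙ : C₁^{⊗n} ⊗ C₂^{⊗n} → (C₁ ⊗ C₂)^{⊗n}`,
`(c₁⊗…⊗cₙ) ⊗ (d₁⊗…⊗dₙ) ↦ ± (c₁⊗d₁) ⊗ … ⊗ (cₙ⊗dₙ)` with the Koszul shuffle sign, is a chain
map and is `Sₙ`-equivariant for the signed permutation actions.  Both claims are stated on
elementary tensors of homogeneous elements `c i` (degrees `dc i`) and `d i` (degrees `dd i`):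
the first conjunct equates `∂((C₁⊗C₂)^{⊗n})` applied to `Vₙ(c ⊗ d)` with `Vₙ` applied to
`∂(c ⊗ d)` (Koszul differentials throughout); the second equates the signed `σ`-action on
`Vₙ(c ⊗ d)` with `Vₙ(σ·c ⊗ σ·d)`. -/
theorem stmt16 (n : ℕ) {C₁ C₂ : Type*} [AddCommGroup C₁] [AddCommGroup C₂]
    [Module ℤ C₁] [Module ℤ C₂]
    (A₁ : ℤ → Submodule ℤ C₁) (A₂ : ℤ → Submodule ℤ C₂)
    (d₁ : C₁ →ₗ[ℤ] C₁) (d₂ : C₂ →ₗ[ℤ] C₂)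
    (hd₁ : ∀ (e : ℤ) (x : C₁), x ∈ A₁ e → d₁ x ∈ A₁ (e - 1))
    (hd₂ : ∀ (e : ℤ) (x : C₂), x ∈ A₂ e → d₂ x ∈ A₂ (e - 1))
    (c : Fin n → C₁) (dc : Fin n → ℤ) (hc : ∀ i, c i ∈ A₁ (dc i))
    (d : Fin n → C₂) (dd : Fin n → ℤ) (hd : ∀ i, d i ∈ A₂ (dd i)) :
    -- (1) Vₙ is a chain map:  ∂(Vₙ(c ⊗ d)) = Vₙ(∂(c ⊗ d)) :
    ((∑ k : Fin n,
        (sgn (∑ l : Fin n, if l < k then dc l + dd l else 0) * sgn (shuffleSign n dc dd)) •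
          (tprod ℤ (s := fun _ : Fin n => C₁ ⊗[ℤ] C₂))
            (Function.update (fun i => c i ⊗ₜ[ℤ] d i) k
              ((d₁ (c k)) ⊗ₜ[ℤ] (d k) + sgn (dc k) • ((c k) ⊗ₜ[ℤ] (d₂ (d k))))))
      = (∑ k : Fin n,
          (sgn (∑ l : Fin n, if l < k then dc l else 0) *
              sgn (shuffleSign n (Function.update dc k (dc k - 1)) dd)) •
            (tprod ℤ (s := fun _ : Fin n => C₁ ⊗[ℤ] C₂))
              (Function.update (fun i => c i ⊗ₜ[ℤ] d i) k ((d₁ (c k)) ⊗ₜ[ℤ] (d k))))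
        + ∑ k : Fin n,
            (sgn (∑ l : Fin n, dc l) * sgn (∑ l : Fin n, if l < k then dd l else 0) *
                sgn (shuffleSign n dc (Function.update dd k (dd k - 1)))) •
              (tprod ℤ (s := fun _ : Fin n => C₁ ⊗[ℤ] C₂))
                (Function.update (fun i => c i ⊗ₜ[ℤ] d i) k ((c k) ⊗ₜ[ℤ] (d₂ (d k)))))
    -- (2) Vₙ is Sₙ-equivariant:  σ · Vₙ(c ⊗ d) = Vₙ(σ·c ⊗ σ·d) :
    ∧ (∀ σ : Equiv.Perm (Fin n),
        (sgn (permSign n σ (fun i => dc i + dd i)) * sgn (shuffleSign n dc dd)) •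
            (tprod ℤ (s := fun _ : Fin n => C₁ ⊗[ℤ] C₂))
              (fun i => c (σ⁻¹ i) ⊗ₜ[ℤ] d (σ⁻¹ i))
          = (sgn (permSign n σ dc) * sgn (permSign n σ dd) *
                sgn (∑ i : Fin n, ∑ j : Fin n, if i < j then dd (σ⁻¹ i) * dc (σ⁻¹ j) else 0)) •
              (tprod ℤ (s := fun _ : Fin n => C₁ ⊗[ℤ] C₂))
                (fun i => c (σ⁻¹ i) ⊗ₜ[ℤ] d (σ⁻¹ i))) := by
  
  constructor
  · -- chain map
    have hstep : ∀ k : Fin n,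
        (sgn (∑ l : Fin n, if l < k then dc l + dd l else 0) * sgn (shuffleSign n dc dd)) •
          (tprod ℤ (s := fun _ : Fin n => C₁ ⊗[ℤ] C₂))
            (Function.update (fun i => c i ⊗ₜ[ℤ] d i) k
              ((d₁ (c k)) ⊗ₜ[ℤ] (d k) + sgn (dc k) • ((c k) ⊗ₜ[ℤ] (d₂ (d k)))))
        = (sgn (∑ l : Fin n, if l < k then dc l else 0) *
              sgn (shuffleSign n (Function.update dc k (dc k - 1)) dd)) •
            (tprod ℤ (s := fun _ : Fin n => C₁ ⊗[ℤ] C₂))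
              (Function.update (fun i => c i ⊗ₜ[ℤ] d i) k ((d₁ (c k)) ⊗ₜ[ℤ] (d k)))
          + (sgn (∑ l : Fin n, dc l) * sgn (∑ l : Fin n, if l < k then dd l else 0) *
                sgn (shuffleSign n dc (Function.update dd k (dd k - 1)))) •
              (tprod ℤ (s := fun _ : Fin n => C₁ ⊗[ℤ] C₂))
                (Function.update (fun i => c i ⊗ₜ[ℤ] d i) k ((c k) ⊗ₜ[ℤ] (d₂ (d k)))) := by
      intro k
      rw [MultilinearMap.map_update_add, MultilinearMap.map_update_smul, smul_add, smul_smul]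
      congr 1
      · congr 1
        rw [shuffle_update_left, sgn_mul, sgn_mul]
        refine sgn_congr ⟨∑ l : Fin n, if l < k then dd l else 0, ?_⟩
        rw [split_lt]
        ring
      · congr 1
        rw [shuffle_update_right, sgn_mul, sgn_mul, sgn_mul, sgn_mul]
        refine sgn_congr ⟨0, ?_⟩
        rw [split_lt, tri_sum n dc k]
        ring
    rw [Finset.sum_congr rfl (fun k _ => hstep k), Finset.sum_add_distrib]
  · -- equivariance
    intro σ
    congr 1
    rw [sgn_mul, sgn_mul, sgn_mul]
    exact sgn_congr (equiv_parity n σ dc dd)
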